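/- Let α = 2√7 − 4. If W is a balanced tetrahedral erasure channel with 0 < H(W) < 1 and E(W) ≥ α·H(W)·(1 − H(W)) (i.e. W is edge-heavy), then both children are edge-heavy: E(W^s) ≥ α·H(W^s)·(1 − H(W^s)) and E(W^p) ≥ α·H(W^p)·(1 − H(W^p)). -/
import Mathlib


noncomputable section

/-- A quintuple of reals representing a candidate tetrahedral erasure channel
`W = (p, q, r, s, t)`. -/
structure TECQuint where
  p : ℝ
  q : ℝ
  r : ℝ
  s : ℝ
  t : ℝ

namespace TECQuint

/-- `W` is a tetrahedral erasure channel: all five entries are nonnegative and sum to 1. -/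
def IsTEC (W : TECQuint) : Prop :=
  0 ≤ W.p ∧ 0 ≤ W.q ∧ 0 ≤ W.r ∧ 0 ≤ W.s ∧ 0 ≤ W.t ∧
    W.p + W.q + W.r + W.s + W.t = 1

/-- `W` is balanced: `q = r = s`. -/
def Balanced (W : TECQuint) : Prop := W.q = W.r ∧ W.r = W.s

/-- The serial child `W^s`. -/
def ser (W : TECQuint) : TECQuint where
  p := W.p ^ 2
  q := W.p * W.s + W.s * W.q + W.q * W.p
  r := W.p * W.q + W.q * W.r + W.r * W.p
  s := W.p * W.r + W.r * W.s + W.s * W.p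
  t := 1 - (W.p ^ 2 + (W.p * W.s + W.s * W.q + W.q * W.p)
      + (W.p * W.q + W.q * W.r + W.r * W.p)
      + (W.p * W.r + W.r * W.s + W.s * W.p))

/-- The parallel child `W^p`. -/
def par (W : TECQuint) : TECQuint where
  p := 1 - ((W.t * W.s + W.s * W.q + W.q * W.t)
      + (W.t * W.q + W.q * W.r + W.r * W.t)
      + (W.t * W.r + W.r * W.s + W.s * W.t) + W.t ^ 2)
  q := W.t * W.s + W.s * W.q + W.q * W.t
  r := W.t * W.q + W.q * W.r + W.r * W.t
  s := W.t * W.r + W.r * W.s + W.s * W.t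
  t := W.t ^ 2

/-- The moment of inertia `A(W) = (q−r)² + (r−s)² + (s−q)²`. -/
def inertia (W : TECQuint) : ℝ :=
  (W.q - W.r) ^ 2 + (W.r - W.s) ^ 2 + (W.s - W.q) ^ 2

/-- The (conditional) entropy `H(W) = (q+r+s)/2 + t`. -/
def entropy (W : TECQuint) : ℝ := (W.q + W.r + W.s) / 2 + W.t

/-- The edge mass `E(W) = q + r + s`. -/
def edgeMass (W : TECQuint) : ℝ := W.q + W.r + W.s

/-- The Quetelet index `Q(W) = E(W) / (H(W)(1−H(W)))`. -/
def quetelet (W : TECQuint) : ℝ :=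
  edgeMass W / (entropy W * (1 - entropy W))

/-- One step of the channel process: `true` picks the serial child, `false` the parallel child. -/
def child (W : TECQuint) (b : Bool) : TECQuint := if b then ser W else par W

/-- The descendant `W^c` of `W` along the string `c ∈ {s,p}^n`. -/
def descend : TECQuint → {n : ℕ} → (Fin n → Bool) → TECQuint
  | W, 0, _ => W
  | W, _ + 1, c => descend (child W (c 0)) (fun i => c i.succ)

end TECQuint

open TECQuint

set_option linter.unusedVariables false

private lemma key (a u v : ℝ) (ha : a^2 = 12 - 8*a) (ha1 : 1 ≤ a) (ha2 : a ≤ 3/2)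
    (hu0 : 0 < u) (hu1 : u < 1) (hv : 0 ≤ v) (hc2 : 3*v ≤ 2*u)
    (hh : a*(u*(1-u)) ≤ 3*v) :
    a * ((1-u^2+3*v^2/4) * (u^2-3*v^2/4)) ≤ 6*v*(u-v) := by
  have ha0 : (0:ℝ) < a := by linarith
  obtain ⟨B, hB⟩ : ∃ B : ℝ, B = 6 + (3*a/4)*(2*u^2-1) := ⟨_, rfl⟩
  obtain ⟨vmin, hvmin⟩ : ∃ x : ℝ, x = a*(u*(1-u))/3 := ⟨_, rfl⟩
  obtain ⟨vmax, hvmax⟩ : ∃ x : ℝ, x = 2*u/3 := ⟨_, rfl⟩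
  obtain ⟨C, hC⟩ : ∃ x : ℝ, x = a*(u^2*(1-u^2)) := ⟨_, rfl⟩
  have hqmin0 : 0 ≤ -B*vmin^2 + 6*u*vmin - C := by
    have hqmin : -B*vmin^2 + 6*u*vmin - C
        = 2*a*(1-2*a/3)*(u^2*((1-u)^3*(1+u))) := by
      rw [hB, hvmin, hC]
      linear_combination (-(a*u^2*(1-u)^2*(2*u^2-1))/12) * ha
    rw [hqmin]
    have h3 : (0:ℝ) ≤ 2*a*(1-2*a/3) := by nlinarith
    have h4 : (0:ℝ) ≤ (1-u)^3 := pow_nonneg (by linarith) 3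
    exact mul_nonneg h3 (mul_nonneg (sq_nonneg u) (mul_nonneg h4 (by linarith)))
  have hqmax0 : 0 ≤ -B*vmax^2 + 6*u*vmax - C := by
    have h6 : -B*vmax^2 + 6*u*vmax - C = (u^2/3)*(4 - 2*a + a*u^2) := by
      rw [hB, hvmax, hC]; ring
    rw [h6]
    have h7 : (0:ℝ) ≤ 4 - 2*a + a*u^2 := by nlinarith [sq_nonneg u]
    positivity
  have hgap : 0 < vmax - vmin := by rw [hvmax, hvmin]; nlinarith
  have hlo : vmin ≤ v := by rw [hvmin]; linarith
  have hhi : v ≤ vmax := by rw [hvmax]; linarith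
  have hBpos : 0 < B := by rw [hB]; nlinarith [sq_nonneg u]
  have h1 : (vmax - vmin) * 0 ≤ (vmax - vmin) * (-B*v^2 + 6*u*v - C) := by
    have hid : (vmax - vmin) * (-B*v^2 + 6*u*v - C)
        = (vmax - v) * (-B*vmin^2 + 6*u*vmin - C)
          + (v - vmin) * (-B*vmax^2 + 6*u*vmax - C)
          + B * ((v - vmin) * ((vmax - v) * (vmax - vmin))) := by ring
    rw [mul_zero, hid]
    have t1 := mul_nonneg (sub_nonneg.2 hhi) hqmin0
    have t2 := mul_nonneg (sub_nonneg.2 hlo) hqmax0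
    have t3 := mul_nonneg hBpos.le (mul_nonneg (sub_nonneg.2 hlo)
      (mul_nonneg (sub_nonneg.2 hhi) hgap.le))
    linarith
  have hqv : 0 ≤ -B*v^2 + 6*u*v - C := le_of_mul_le_mul_left h1 hgap
  have hv4 : (0:ℝ) ≤ 9*a/16*v^4 := by positivity
  have hfin : 6*v*(u-v) - a * ((1-u^2+3*v^2/4) * (u^2-3*v^2/4))
      = (-B*v^2 + 6*u*v - C) + 9*a/16*v^4 := by rw [hB, hC]; ring
  linarith


theorem trapping_region (W : TECQuint) (hW : W.IsTEC) (hbal : W.Balanced)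
    (h0 : 0 < entropy W) (h1 : entropy W < 1)
    (hheavy : (2 * Real.sqrt 7 - 4) * (entropy W * (1 - entropy W)) ≤ edgeMass W) :
    (2 * Real.sqrt 7 - 4) * (entropy (ser W) * (1 - entropy (ser W))) ≤ edgeMass (ser W) ∧
      (2 * Real.sqrt 7 - 4) * (entropy (par W) * (1 - entropy (par W))) ≤ edgeMass (par W) := by
  obtain ⟨hp0, hq0, hr0, hs0, ht0, hsum⟩ := hW
  obtain ⟨hqr, hrs⟩ := hbal
  have hr : W.r = W.q := hqr.symm
  have hs : W.s = W.q := (hqr.trans hrs).symm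
  have h7 : Real.sqrt 7 ^ 2 = 7 := Real.sq_sqrt (by norm_num)
  have hs7 : (5:ℝ)/2 ≤ Real.sqrt 7 := by nlinarith [h7, Real.sqrt_nonneg 7]
  have hs7' : Real.sqrt 7 ≤ 11/4 := by nlinarith [h7, Real.sqrt_nonneg 7]
  have ha : (2*Real.sqrt 7 - 4)^2 = 12 - 8*(2*Real.sqrt 7 - 4) := by
    linear_combination 4*h7
  have ha1 : (1:ℝ) ≤ 2*Real.sqrt 7 - 4 := by linarith
  have ha2 : (2*Real.sqrt 7 - 4 : ℝ) ≤ 3/2 := by linarith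
  simp only [entropy, edgeMass, ser, par] at h0 h1 hheavy ⊢
  rw [hr, hs] at h0 h1 hheavy hsum ⊢
  have hHH : (W.p + 3*W.q/2)*(1-(W.p + 3*W.q/2))
      = ((W.q + W.q + W.q)/2 + W.t)*(1-((W.q + W.q + W.q)/2 + W.t)) := by
    linear_combination (W.t - W.p) * hsum
  constructor
  · have hk := key (2*Real.sqrt 7 - 4) (W.p + 3*W.q/2) W.q ha ha1 ha2
      (by linarith) (by linarith) hq0 (by linarith)
      (by rw [hHH]; linarith [hheavy])
    nlinarith [hk]
  · have hk := key (2*Real.sqrt 7 - 4) (W.t + 3*W.q/2) W.q ha ha1 ha2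
      (by linarith) (by linarith) hq0 (by linarith)
      (by linarith [hheavy])
    nlinarith [hk]
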